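/- Let b > 0, β = 2, κ > 0, and f(x) = ((d+κ)/2) log(1+|x|²). Define g_in(r) = r b^{1/2} exp( b r² − (10/3) b^{3/2} r³ + (15/4) b² r⁴ − (6/5) b^{5/2} r⁵ + 47/60 ) for r ∈ [0, b^{-1/2}), and g(r) = g_in(r) for r < b^{-1/2}, g(r) = exp(b r²) for r ≥ b^{-1/2}. Then g satisfies Assumption G1: g_in maps [0, b^{-1/2}) onto [0, e), is strictly increasing and twice continuously differentiable, g_in(0) = 0, and as r → b^{-1/2} from the left: g_in(r) → e, g_in'(r) → 2 b^{1/2} e, g_in''(r) → 6 b e, g_in'''(r) → 20 b^{3/2} e; moreover |f'(g_in(r)) g_in'(r)/r|, |(d/dr) log g_in'(r)/r|, |(d/dr) log(g_in(r)/r)/r|, |(d²/dr²) log(g_in(r)/r)| and |(d²/dr²) log g_in'(r)| remain bounded as r → 0⁺. -/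

import Mathlib

open Filter MeasureTheory Set
open scoped RealInnerProductSpace Topology

noncomputable section

/-- The explicit initial function `g_in` of equation (24) of the paper (case `β = 2`):
`g_in(r) = r b^{1/2} exp(b r² − (10/3) b^{3/2} r³ + (15/4) b² r⁴ − (6/5) b^{5/2} r⁵ + 47/60)`. -/
def ginExplicit (b : ℝ) (r : ℝ) : ℝ :=
  r * b ^ ((1:ℝ)/2) *
    Real.exp (b * r^2 - 10/3 * b ^ ((3:ℝ)/2) * r^3 + 15/4 * b^2 * r^4
      - 6/5 * b ^ ((5:ℝ)/2) * r^5 + 47/60)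


def PE (u : ℝ) : ℝ := u^2 - 10/3*u^3 + 15/4*u^4 - 6/5*u^5 + 47/60
def PE1 (u : ℝ) : ℝ := 2*u - 10*u^2 + 15*u^3 - 6*u^4
def PE2 (u : ℝ) : ℝ := 2 - 20*u + 45*u^2 - 24*u^3
def QE (u : ℝ) : ℝ := 1 + 2*u^2 - 10*u^3 + 15*u^4 - 6*u^5
def QE1 (u : ℝ) : ℝ := 4*u - 30*u^2 + 60*u^3 - 30*u^4
def QE2 (u : ℝ) : ℝ := 4 - 60*u + 180*u^2 - 120*u^3
def PE1b (u : ℝ) : ℝ := 2 - 10*u + 15*u^2 - 6*u^3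
def QE1b (u : ℝ) : ℝ := 4 - 30*u + 60*u^2 - 30*u^3

lemma hasDerivAt_PE (u : ℝ) : HasDerivAt PE (PE1 u) u := by
  have h2 := hasDerivAt_pow 2 u
  have h3 := (hasDerivAt_pow 3 u).const_mul (10/3 : ℝ)
  have h4 := (hasDerivAt_pow 4 u).const_mul (15/4 : ℝ)
  have h5 := (hasDerivAt_pow 5 u).const_mul (6/5 : ℝ)
  have h := (((h2.sub h3).add h4).sub h5).add_const (47/60 : ℝ)
  refine h.congr_deriv ?_
  unfold PE1; push_cast; ring

lemma hasDerivAt_PE1 (u : ℝ) : HasDerivAt PE1 (PE2 u) u := by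
  have h1 := (hasDerivAt_id u).const_mul (2 : ℝ)
  have h2 := (hasDerivAt_pow 2 u).const_mul (10 : ℝ)
  have h3 := (hasDerivAt_pow 3 u).const_mul (15 : ℝ)
  have h4 := (hasDerivAt_pow 4 u).const_mul (6 : ℝ)
  have h := ((h1.sub h2).add h3).sub h4
  refine h.congr_deriv ?_
  unfold PE2; push_cast; ring

lemma hasDerivAt_QE (u : ℝ) : HasDerivAt QE (QE1 u) u := by
  have h2 := (hasDerivAt_pow 2 u).const_mul (2 : ℝ)
  have h3 := (hasDerivAt_pow 3 u).const_mul (10 : ℝ)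
  have h4 := (hasDerivAt_pow 4 u).const_mul (15 : ℝ)
  have h5 := (hasDerivAt_pow 5 u).const_mul (6 : ℝ)
  have h := (((h2.sub h3).add h4).sub h5).const_add (1 : ℝ)
  have hfun : QE = fun x => 1 + (2*x^2 - 10*x^3 + 15*x^4 - 6*x^5) := by
    ext x; unfold QE; ring
  rw [hfun]; refine h.congr_deriv ?_
  unfold QE1; push_cast; ring

lemma hasDerivAt_QE1 (u : ℝ) : HasDerivAt QE1 (QE2 u) u := by
  have h1 := (hasDerivAt_id u).const_mul (4 : ℝ)
  have h2 := (hasDerivAt_pow 2 u).const_mul (30 : ℝ)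
  have h3 := (hasDerivAt_pow 3 u).const_mul (60 : ℝ)
  have h4 := (hasDerivAt_pow 4 u).const_mul (30 : ℝ)
  have h := ((h1.sub h2).add h3).sub h4
  refine h.congr_deriv ?_
  unfold QE2; push_cast; ring

lemma QE_pos {u : ℝ} (h0 : 0 ≤ u) (h1 : u ≤ 1) : 0 < QE u := by
  unfold QE
  nlinarith [sq_nonneg (3*u^2 - 5/3*u), mul_nonneg (pow_nonneg h0 4) (sub_nonneg.2 h1), sq_nonneg u]

def G0f (a r : ℝ) : ℝ := a * Real.exp (PE (a*r)) * QE (a*r)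
def G1f (a r : ℝ) : ℝ := a^2 * Real.exp (PE (a*r)) * (PE1 (a*r) * QE (a*r) + QE1 (a*r))
def G2f (a r : ℝ) : ℝ := a^3 * Real.exp (PE (a*r)) *
  (PE2 (a*r) * QE (a*r) + PE1 (a*r)^2 * QE (a*r) + 2 * PE1 (a*r) * QE1 (a*r) + QE2 (a*r))

lemma hasDerivAt_affine (a r : ℝ) : HasDerivAt (fun r : ℝ => a*r) a r := by
  simpa using (hasDerivAt_id r).const_mul a

lemma hasDerivAt_gin_aux (a r : ℝ) :
    HasDerivAt (fun r => (a*r) * Real.exp (PE (a*r))) (G0f a r) r := by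
  have hu := hasDerivAt_affine a r
  have hP : HasDerivAt (fun r => PE (a*r)) (PE1 (a*r) * a) r := (hasDerivAt_PE (a*r)).comp r hu
  have h := hu.mul hP.exp
  refine h.congr_deriv ?_
  unfold G0f QE PE1
  ring

lemma hasDerivAt_G0f (a r : ℝ) : HasDerivAt (G0f a) (G1f a r) r := by
  have hu := hasDerivAt_affine a r
  have hP : HasDerivAt (fun r => PE (a*r)) (PE1 (a*r) * a) r := (hasDerivAt_PE (a*r)).comp r hu
  have hQ : HasDerivAt (fun r => QE (a*r)) (QE1 (a*r) * a) r := (hasDerivAt_QE (a*r)).comp r hu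
  have h := (hP.exp.const_mul a).mul hQ
  refine h.congr_deriv ?_
  unfold G1f
  ring

lemma hasDerivAt_G1f (a r : ℝ) : HasDerivAt (G1f a) (G2f a r) r := by
  have hu := hasDerivAt_affine a r
  have hP : HasDerivAt (fun r => PE (a*r)) (PE1 (a*r) * a) r := (hasDerivAt_PE (a*r)).comp r hu
  have hP1 : HasDerivAt (fun r => PE1 (a*r)) (PE2 (a*r) * a) r := (hasDerivAt_PE1 (a*r)).comp r hu
  have hQ : HasDerivAt (fun r => QE (a*r)) (QE1 (a*r) * a) r := (hasDerivAt_QE (a*r)).comp r hu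
  have hQ1 : HasDerivAt (fun r => QE1 (a*r)) (QE2 (a*r) * a) r := (hasDerivAt_QE1 (a*r)).comp r hu
  have hS : HasDerivAt (fun r => PE1 (a*r) * QE (a*r) + QE1 (a*r))
      ((PE2 (a*r) * a) * QE (a*r) + PE1 (a*r) * (QE1 (a*r) * a) + QE2 (a*r) * a) r :=
    (hP1.mul hQ).add hQ1
  have h := (hP.exp.const_mul (a^2)).mul hS
  refine h.congr_deriv ?_
  unfold G2f
  ring

lemma cont_G0f (a : ℝ) : Continuous (G0f a) := by unfold G0f PE QE; fun_prop
lemma cont_G1f (a : ℝ) : Continuous (G1f a) := by unfold G1f PE PE1 QE QE1; fun_prop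
lemma cont_G2f (a : ℝ) : Continuous (G2f a) := by unfold G2f PE PE1 PE2 QE QE1 QE2; fun_prop

lemma gin_funext {b : ℝ} (hb : 0 < b) :
    ginExplicit b = fun r => (b ^ ((1:ℝ)/2) * r) * Real.exp (PE (b ^ ((1:ℝ)/2) * r)) := by
  set A := b ^ ((1:ℝ)/2) with hA
  have hA2 : A^2 = b := by
    rw [hA, ← Real.rpow_natCast (b ^ ((1:ℝ)/2)) 2, ← Real.rpow_mul hb.le]; norm_num
  have hA3 : A^3 = b ^ ((3:ℝ)/2) := by
    rw [hA, ← Real.rpow_natCast (b ^ ((1:ℝ)/2)) 3, ← Real.rpow_mul hb.le]; norm_num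
  have hA4 : A^4 = b^2 := by
    rw [hA, ← Real.rpow_natCast (b ^ ((1:ℝ)/2)) 4, ← Real.rpow_mul hb.le]
    norm_num
  have hA5 : A^5 = b ^ ((5:ℝ)/2) := by
    rw [hA, ← Real.rpow_natCast (b ^ ((1:ℝ)/2)) 5, ← Real.rpow_mul hb.le]; norm_num
  funext r
  unfold ginExplicit
  rw [← hA]
  have harg : b * r^2 - 10/3 * b ^ ((3:ℝ)/2) * r^3 + 15/4 * b^2 * r^4
      - 6/5 * b ^ ((5:ℝ)/2) * r^5 + 47/60 = PE (A*r) := by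
    unfold PE
    linear_combination r^2 * hA2.symm + 10/3*r^3 * hA3 - 15/4*r^4 * hA4 + 6/5*r^5 * hA5
  rw [harg]; ring

lemma bounded_of_eventuallyEq {F G : ℝ → ℝ} {t : ℝ} (ht : 0 < t)
    (hFG : ∀ r ∈ Ioo (0:ℝ) t, F r = G r) (hG : ContinuousAt G 0) :
    ∃ C : ℝ, ∀ᶠ r in 𝓝[>] (0:ℝ), |F r| ≤ C := by
  refine ⟨|G 0| + 1, ?_⟩
  have h1 : Tendsto (fun r => |G r|) (𝓝[>] (0:ℝ)) (𝓝 |G 0|) :=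
    (hG.tendsto.mono_left nhdsWithin_le_nhds).abs
  have h2 : ∀ᶠ r in 𝓝[>] (0:ℝ), |G r| < |G 0| + 1 :=
    h1.eventually_lt_const (lt_add_one _)
  have h3 : Ioo (0:ℝ) t ∈ 𝓝[>] (0:ℝ) := Ioo_mem_nhdsGT_of_mem ⟨le_refl 0, ht⟩
  filter_upwards [h2, h3] with r hr hrt
  rw [hFG r hrt]; exact hr.le


/-- Lemma 5.5 of the paper: with `β = 2`,
`f(x) = ((d+κ)/2) log(1+|x|²)` and the explicit `g_in` above, Assumption G1 holds:
`g_in` maps `[0, b^{-1/2})` onto `[0, e)`, is strictly increasing and twice continuously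
differentiable, `g_in 0 = 0`, the boundary limits at `b^{-1/2}` are
`e, 2b^{1/2}e, 6be, 20b^{3/2}e`, and the stated quantities remain bounded as `r → 0⁺`. -/
theorem ginExplicit_satisfies_G1
    (d : ℕ) (b κ : ℝ) (hb : 0 < b) (hκ : 0 < κ) :
    MapsTo (ginExplicit b) (Ico (0:ℝ) (b ^ (-1/(2:ℝ)))) (Ico (0:ℝ) (Real.exp 1)) ∧
    SurjOn (ginExplicit b) (Ico (0:ℝ) (b ^ (-1/(2:ℝ)))) (Ico (0:ℝ) (Real.exp 1)) ∧
    StrictMonoOn (ginExplicit b) (Ico (0:ℝ) (b ^ (-1/(2:ℝ)))) ∧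
    ContDiffOn ℝ 2 (ginExplicit b) (Ico (0:ℝ) (b ^ (-1/(2:ℝ)))) ∧
    ginExplicit b 0 = 0 ∧
    Tendsto (ginExplicit b)
      (nhdsWithin (b ^ (-1/(2:ℝ))) (Iio (b ^ (-1/(2:ℝ))))) (nhds (Real.exp 1)) ∧
    Tendsto (deriv (ginExplicit b))
      (nhdsWithin (b ^ (-1/(2:ℝ))) (Iio (b ^ (-1/(2:ℝ)))))
      (nhds (2 * b ^ ((1:ℝ)/2) * Real.exp 1)) ∧
    Tendsto (deriv (deriv (ginExplicit b)))
      (nhdsWithin (b ^ (-1/(2:ℝ))) (Iio (b ^ (-1/(2:ℝ)))))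
      (nhds (6 * b * Real.exp 1)) ∧
    Tendsto (deriv (deriv (deriv (ginExplicit b))))
      (nhdsWithin (b ^ (-1/(2:ℝ))) (Iio (b ^ (-1/(2:ℝ)))))
      (nhds (20 * b ^ ((3:ℝ)/2) * Real.exp 1)) ∧
    (∃ C : ℝ, ∀ᶠ r in nhdsWithin 0 (Ioi (0:ℝ)),
      |deriv (fun s => ((d:ℝ) + κ)/2 * Real.log (1 + s^2)) (ginExplicit b r)
        * deriv (ginExplicit b) r / r| ≤ C) ∧
    (∃ C : ℝ, ∀ᶠ r in nhdsWithin 0 (Ioi (0:ℝ)),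
      |deriv (fun s => Real.log (deriv (ginExplicit b) s)) r / r| ≤ C) ∧
    (∃ C : ℝ, ∀ᶠ r in nhdsWithin 0 (Ioi (0:ℝ)),
      |deriv (fun s => Real.log (ginExplicit b s / s)) r / r| ≤ C) ∧
    (∃ C : ℝ, ∀ᶠ r in nhdsWithin 0 (Ioi (0:ℝ)),
      |deriv (deriv (fun s => Real.log (ginExplicit b s / s))) r| ≤ C) ∧
    (∃ C : ℝ, ∀ᶠ r in nhdsWithin 0 (Ioi (0:ℝ)),
      |deriv (deriv (fun s => Real.log (deriv (ginExplicit b) s))) r| ≤ C) := by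
  set A := b ^ ((1:ℝ)/2) with hAdef
  set r0 := b ^ (-1/(2:ℝ)) with hr0def
  have hA : 0 < A := Real.rpow_pos_of_pos hb _
  have hr0pos : 0 < r0 := Real.rpow_pos_of_pos hb _
  have hAr0 : A * r0 = 1 := by
    rw [hAdef, hr0def, ← Real.rpow_add hb]; norm_num
  have hA2 : A^2 = b := by
    rw [hAdef, ← Real.rpow_natCast (b ^ ((1:ℝ)/2)) 2, ← Real.rpow_mul hb.le]; norm_num
  have hA3 : A^3 = b ^ ((3:ℝ)/2) := by
    rw [hAdef, ← Real.rpow_natCast (b ^ ((1:ℝ)/2)) 3, ← Real.rpow_mul hb.le]; norm_num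
  have gin_eq : ∀ r, ginExplicit b r = (A*r) * Real.exp (PE (A*r)) := fun r => by
    rw [gin_funext hb]
  have hgin : ∀ r, HasDerivAt (ginExplicit b) (G0f A r) r := fun r => by
    rw [gin_funext hb]; exact hasDerivAt_gin_aux A r
  have hcont : Continuous (ginExplicit b) := by
    rw [gin_funext hb]; unfold PE; fun_prop
  have hd1 : deriv (ginExplicit b) = G0f A := funext fun r => (hgin r).deriv
  have hd2 : deriv (G0f A) = G1f A := funext fun r => (hasDerivAt_G0f A r).deriv
  have hd3 : deriv (G1f A) = G2f A := funext fun r => (hasDerivAt_G1f A r).deriv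
  have hPEv : PE 1 = 1 := by norm_num [PE]
  have hQEv : QE 1 = 2 := by norm_num [QE]
  have hPE1v : PE1 1 = 1 := by norm_num [PE1]
  have hQE1v : QE1 1 = 4 := by norm_num [QE1]
  have hPE2v : PE2 1 = 3 := by norm_num [PE2]
  have hQE2v : QE2 1 = 4 := by norm_num [QE2]
  have hgin0 : ginExplicit b 0 = 0 := by simp [ginExplicit]
  have hgr0e : ginExplicit b r0 = Real.exp 1 := by
    rw [gin_eq r0, hAr0, hPEv, one_mul]
  have hG0pos : ∀ r ∈ Ioo (0:ℝ) r0, 0 < G0f A r := by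
    intro r hr
    have hu0 : 0 ≤ A * r := le_of_lt (mul_pos hA hr.1)
    have hu1 : A * r ≤ 1 := by
      have := mul_lt_mul_of_pos_left hr.2 hA
      rw [hAr0] at this; exact this.le
    exact mul_pos (mul_pos hA (Real.exp_pos _)) (QE_pos hu0 hu1)
  have hmono : StrictMonoOn (ginExplicit b) (Icc 0 r0) := by
    apply strictMonoOn_of_deriv_pos (convex_Icc _ _) hcont.continuousOn
    intro r hr
    rw [interior_Icc] at hr
    rw [hd1]
    exact hG0pos r hr
  -- MapsTo
  have hmaps : MapsTo (ginExplicit b) (Ico (0:ℝ) r0) (Ico (0:ℝ) (Real.exp 1)) := by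
    intro r hr
    constructor
    · rcases eq_or_lt_of_le hr.1 with h | h
      · rw [← h, hgin0]
      · have := hmono ⟨le_refl 0, hr0pos.le⟩ ⟨hr.1, hr.2.le⟩ h
        rw [hgin0] at this; exact this.le
    · have := hmono ⟨hr.1, hr.2.le⟩ ⟨hr0pos.le, le_refl r0⟩ hr.2
      rw [hgr0e] at this; exact this
  -- SurjOn
  have hsurj : SurjOn (ginExplicit b) (Ico (0:ℝ) r0) (Ico (0:ℝ) (Real.exp 1)) := by
    intro y hy
    have hIcc := intermediate_value_Icc hr0pos.le hcont.continuousOn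
    have hy' : y ∈ Icc (ginExplicit b 0) (ginExplicit b r0) := by
      rw [hgin0, hgr0e]; exact ⟨hy.1, hy.2.le⟩
    obtain ⟨r, hrmem, hry⟩ := hIcc hy'
    refine ⟨r, ⟨hrmem.1, lt_of_le_of_ne hrmem.2 ?_⟩, hry⟩
    rintro rfl
    rw [hgr0e] at hry
    exact (ne_of_gt hy.2) hry
  have hCD : ContDiff ℝ 2 (ginExplicit b) := by
    rw [gin_funext hb]; unfold PE; fun_prop
  -- limits
  have hlim0 : Tendsto (ginExplicit b) (𝓝[<] r0) (𝓝 (Real.exp 1)) := by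
    rw [← hgr0e]; exact (hcont.tendsto r0).mono_left nhdsWithin_le_nhds
  have hlim1 : Tendsto (deriv (ginExplicit b)) (𝓝[<] r0) (𝓝 (2 * A * Real.exp 1)) := by
    have hval : G0f A r0 = 2 * A * Real.exp 1 := by
      unfold G0f; rw [hAr0, hPEv, hQEv]; ring
    rw [hd1, ← hval]
    exact ((cont_G0f A).tendsto r0).mono_left nhdsWithin_le_nhds
  have hlim2 : Tendsto (deriv (deriv (ginExplicit b))) (𝓝[<] r0) (𝓝 (6 * b * Real.exp 1)) := by
    have hval : G1f A r0 = 6 * b * Real.exp 1 := by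
      unfold G1f; rw [hAr0, hPEv, hPE1v, hQEv, hQE1v, hA2]; ring
    rw [hd1, hd2, ← hval]
    exact ((cont_G1f A).tendsto r0).mono_left nhdsWithin_le_nhds
  have hlim3 : Tendsto (deriv (deriv (deriv (ginExplicit b)))) (𝓝[<] r0)
      (𝓝 (20 * b ^ ((3:ℝ)/2) * Real.exp 1)) := by
    have hval : G2f A r0 = 20 * b ^ ((3:ℝ)/2) * Real.exp 1 := by
      unfold G2f; rw [hAr0, hPEv, hPE1v, hPE2v, hQEv, hQE1v, hQE2v, hA3]; ring
    rw [hd1, hd2, hd3, ← hval]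
    exact ((cont_G2f A).tendsto r0).mono_left nhdsWithin_le_nhds
  -- item 3 pointwise
  have hlogq : ∀ s ∈ Ioi (0:ℝ),
      deriv (fun s => Real.log (ginExplicit b s / s)) s = PE1 (A*s) * A := by
    intro s hs
    have hev : (fun s => Real.log (ginExplicit b s / s)) =ᶠ[𝓝 s]
        (fun s => Real.log A + PE (A*s)) := by
      filter_upwards [Ioi_mem_nhds hs] with x hx
      rw [gin_eq x]
      have hx0 : (x:ℝ) ≠ 0 := ne_of_gt hx
      have h1 : (A*x) * Real.exp (PE (A*x)) / x = A * Real.exp (PE (A*x)) := by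
        field_simp
      rw [h1, Real.log_mul (ne_of_gt hA) (Real.exp_ne_zero _), Real.log_exp]
    rw [hev.deriv_eq]
    exact (((hasDerivAt_PE (A*s)).comp s (hasDerivAt_affine A s)).const_add (Real.log A)).deriv
  -- item 2 pointwise
  have hlogd : ∀ r ∈ Ioo (0:ℝ) r0,
      deriv (fun s => Real.log (deriv (ginExplicit b) s)) r = G1f A r / G0f A r := by
    intro r hr
    rw [hd1]
    exact ((hasDerivAt_G0f A r).log (ne_of_gt (hG0pos r hr))).deriv
  refine ⟨hmaps, hsurj, hmono.mono Ico_subset_Icc_self, hCD.contDiffOn, hgin0,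
    hlim0, hlim1, hlim2, hlim3, ?_, ?_, ?_, ?_, ?_⟩
  -- item 1
  · set c : ℝ := ((d:ℝ) + κ)/2 with hc
    have hfder : ∀ x : ℝ, deriv (fun s => c * Real.log (1 + s^2)) x
        = c * ((2*x) / (1 + x^2)) := by
      intro x
      have h1x : (1:ℝ) + x^2 ≠ 0 := by positivity
      have h := (((hasDerivAt_pow 2 x).const_add 1).log h1x).const_mul c
      rw [h.deriv]
      norm_num
    apply bounded_of_eventuallyEq hr0pos
      (G := fun r => c * 2 * (A * Real.exp (PE (A*r))) * (G0f A r) / (1 + (ginExplicit b r)^2))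
    · intro r hr
      rw [hfder, hd1]
      have hgr : ginExplicit b r = r * (A * Real.exp (PE (A*r))) := by rw [gin_eq]; ring
      rw [hgr]
      have hden : (1:ℝ) + (r * (A * Real.exp (PE (A*r))))^2 ≠ 0 := by positivity
      field_simp [ne_of_gt hr.1]
    · apply ContinuousAt.div
      · have : Continuous (fun r => c * 2 * (A * Real.exp (PE (A*r))) * (G0f A r)) := by
          have := cont_G0f A
          unfold PE at *
          fun_prop
        exact this.continuousAt
      · exact (continuous_const.add (hcont.pow 2)).continuousAt
      · simp [hgin0]
  -- item 2
  · apply bounded_of_eventuallyEq hr0pos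
      (G := fun r => A^2 * (PE1b (A*r) * QE (A*r) + QE1b (A*r)) / QE (A*r))
    · intro r hr
      rw [hlogd r hr]
      have hQpos : 0 < QE (A*r) := by
        have hu0 : 0 ≤ A * r := le_of_lt (mul_pos hA hr.1)
        have hu1 : A * r ≤ 1 := by
          have := mul_lt_mul_of_pos_left hr.2 hA
          rw [hAr0] at this; exact this.le
        exact QE_pos hu0 hu1
      have h1 : PE1 (A*r) = (A*r) * PE1b (A*r) := by unfold PE1 PE1b; ring
      have h2 : QE1 (A*r) = (A*r) * QE1b (A*r) := by unfold QE1 QE1b; ring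
      unfold G1f G0f
      rw [h1, h2]
      field_simp [ne_of_gt hQpos, ne_of_gt hr.1, ne_of_gt hA]
    · apply ContinuousAt.div
      · have : Continuous (fun r => A^2 * (PE1b (A*r) * QE (A*r) + QE1b (A*r))) := by
          unfold PE1b QE QE1b; fun_prop
        exact this.continuousAt
      · have : Continuous (fun r : ℝ => QE (A*r)) := by unfold QE; fun_prop
        exact this.continuousAt
      · simp only [mul_zero]
        norm_num [QE]
  -- item 3
  · apply bounded_of_eventuallyEq hr0pos (G := fun r => A^2 * PE1b (A*r))
    · intro r hr
      rw [hlogq r hr.1]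
      have h1 : PE1 (A*r) = (A*r) * PE1b (A*r) := by unfold PE1 PE1b; ring
      rw [h1]
      field_simp [ne_of_gt hr.1]
    · have : Continuous (fun r => A^2 * PE1b (A*r)) := by unfold PE1b; fun_prop
      exact this.continuousAt
  -- item 4
  · apply bounded_of_eventuallyEq hr0pos (G := fun r => PE2 (A*r) * A * A)
    · intro r hr
      have hev : deriv (fun s => Real.log (ginExplicit b s / s)) =ᶠ[𝓝 r]
          (fun s => PE1 (A*s) * A) :=
        eventually_of_mem (Ioi_mem_nhds hr.1) (fun s hs => hlogq s hs)
      rw [hev.deriv_eq]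
      exact (((hasDerivAt_PE1 (A*r)).comp r (hasDerivAt_affine A r)).mul_const A).deriv
    · have : Continuous (fun r => PE2 (A*r) * A * A) := by unfold PE2; fun_prop
      exact this.continuousAt
  -- item 5
  · apply bounded_of_eventuallyEq hr0pos
      (G := fun r => (G2f A r * G0f A r - G1f A r * G1f A r) / (G0f A r)^2)
    · intro r hr
      have hev : deriv (fun s => Real.log (deriv (ginExplicit b) s)) =ᶠ[𝓝 r]
          (fun s => G1f A s / G0f A s) :=
        eventually_of_mem (isOpen_Ioo.mem_nhds hr) (fun s hs => hlogd s hs)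
      rw [hev.deriv_eq]
      exact ((hasDerivAt_G1f A r).div (hasDerivAt_G0f A r) (ne_of_gt (hG0pos r hr))).deriv
    · have hG00 : G0f A 0 ≠ 0 := by
        unfold G0f
        have : QE (A*0) = 1 := by norm_num [QE]
        rw [this]
        positivity
      exact (((cont_G2f A).mul (cont_G0f A)).sub ((cont_G1f A).mul (cont_G1f A))).continuousAt.div
        (((cont_G0f A).pow 2).continuousAt) (by positivity)
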